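/- Fix ρ > 0 and β ∈ (0,1), set r(n) = ⌊ln n⌋ and s(n) = ⌊n^{2/(3+β)}⌋, and define Σ_{2+ρ}(n) = ∑_{k=r(n)+1}^{s(n)} (1/√n)·(k/√n)^{2+ρ}·exp(−k²/(2n)) and I_{2+ρ}(n) = ∫_{(r(n)+1)/√n}^{(s(n)+1)/√n} x^{2+ρ}·exp(−x²/2) dx. Then Σ_{2+ρ}(n) = I_{2+ρ}(n) + O(n^{−1/2}) as n → ∞. -/

import Mathlib

open MeasureTheory Real Finset intervalIntegral

namespace RiemannAux

noncomputable def ff (p x : ℝ) : ℝ := x ^ p * Real.exp (-x ^ 2 / 2)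
noncomputable def gg (p x : ℝ) : ℝ :=
  p * x ^ (p - 1) * Real.exp (-x ^ 2 / 2) - x ^ p * Real.exp (-x ^ 2 / 2) * x
noncomputable def GG (p x : ℝ) : ℝ :=
  p * x ^ (p - 1) * Real.exp (-x ^ 2 / 2) + x ^ (p + 1) * Real.exp (-x ^ 2 / 2)

lemma cont_rpow {q : ℝ} (hq : 0 ≤ q) : Continuous fun x : ℝ => x ^ q := by
  rw [continuous_iff_continuousAt]
  exact fun x => Real.continuousAt_rpow_const x q (Or.inr hq)

lemma cont_exp : Continuous fun x : ℝ => Real.exp (-x ^ 2 / 2) := by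
  fun_prop

lemma ff_continuous {p : ℝ} (hp : 1 ≤ p) : Continuous (ff p) :=
  (cont_rpow (by linarith)).mul cont_exp

lemma gg_continuous {p : ℝ} (hp : 1 ≤ p) : Continuous (gg p) := by
  exact ((continuous_const.mul (cont_rpow (by linarith))).mul cont_exp).sub
    (((cont_rpow (by linarith)).mul cont_exp).mul continuous_id)

lemma hasDerivAt_ff {p : ℝ} (hp : 1 ≤ p) (x : ℝ) : HasDerivAt (ff p) (gg p x) x := by
  have h1 : HasDerivAt (fun y : ℝ => y ^ p) (p * x ^ (p - 1)) x :=
    Real.hasDerivAt_rpow_const (Or.inr hp)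
  have h2 : HasDerivAt (fun y : ℝ => -y ^ 2 / 2) (-x) x := by
    have := ((hasDerivAt_pow 2 x).neg).div_const 2
    refine this.congr_deriv ?_
    push_cast
    ring
  have h3 : HasDerivAt (fun y : ℝ => Real.exp (-y ^ 2 / 2))
      (Real.exp (-x ^ 2 / 2) * (-x)) x := (Real.hasDerivAt_exp _).comp x h2
  have := h1.mul h3
  refine this.congr_deriv ?_
  unfold gg
  ring

lemma ftc {p : ℝ} (hp : 1 ≤ p) (a b : ℝ) :
    ∫ x in a..b, gg p x = ff p b - ff p a :=
  intervalIntegral.integral_eq_sub_of_hasDerivAt (fun x _ => hasDerivAt_ff hp x)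
    ((gg_continuous hp).intervalIntegrable _ _)

lemma abs_gg_le {p : ℝ} (hp : 1 ≤ p) {x : ℝ} (hx : 0 < x) : |gg p x| ≤ GG p x := by
  unfold gg GG
  have hxp : x ^ p * Real.exp (-x ^ 2 / 2) * x = x ^ (p + 1) * Real.exp (-x ^ 2 / 2) := by
    rw [Real.rpow_add_one hx.ne']; ring
  rw [hxp]
  refine (abs_sub _ _).trans ?_
  have h0 : 0 ≤ p := by linarith
  gcongr <;> rw [abs_of_nonneg (by positivity)]

lemma GG_integrableOn {p : ℝ} (hp : 1 ≤ p) : IntegrableOn (GG p) (Set.Ioi 0) := by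
  have h1 : IntegrableOn (fun x : ℝ => x ^ (p - 1) * Real.exp (-(1/2) * x ^ 2)) (Set.Ioi 0) :=
    integrableOn_rpow_mul_exp_neg_mul_sq (by norm_num) (by linarith)
  have h2 : IntegrableOn (fun x : ℝ => x ^ (p + 1) * Real.exp (-(1/2) * x ^ 2)) (Set.Ioi 0) :=
    integrableOn_rpow_mul_exp_neg_mul_sq (by norm_num) (by linarith)
  have := (h1.const_mul p).add h2
  refine this.congr ?_
  filter_upwards with x
  unfold GG
  simp only [Pi.add_apply]
  rw [show -(1/2) * x ^ 2 = -x ^ 2 / 2 by ring]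
  ring

/-- per-interval Riemann sum error bound -/
lemma step {p : ℝ} (hp : 1 ≤ p) {a h : ℝ} (ha : 0 < a) (hh : 0 ≤ h) :
    |h * ff p a - ∫ x in a..(a + h), ff p x| ≤ h * ∫ x in a..(a + h), |gg p x| := by
  have hab : a ≤ a + h := by linarith
  have key : ∀ x ∈ Set.Icc a (a + h), |ff p a - ff p x| ≤ ∫ t in a..(a + h), |gg p t| := by
    intro x hx
    rw [abs_sub_comm, show ff p x - ff p a = ∫ t in a..x, gg p t from (ftc hp a x).symm]
    refine (intervalIntegral.abs_integral_le_integral_abs hx.1).trans ?_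
    exact intervalIntegral.integral_mono_interval le_rfl hx.1 hx.2
      (Filter.Eventually.of_forall fun t => abs_nonneg _)
      (((gg_continuous hp).abs).intervalIntegrable _ _)
  have hconst : h * ff p a = ∫ _x in a..(a + h), ff p a := by
    rw [intervalIntegral.integral_const, smul_eq_mul]; ring
  rw [hconst, ← intervalIntegral.integral_sub (intervalIntegrable_const)
    (((ff_continuous hp)).intervalIntegrable _ _)]
  refine (intervalIntegral.abs_integral_le_integral_abs hab).trans ?_
  have : (∫ x in a..(a + h), |ff p a - ff p x|) ≤
      ∫ _x in a..(a + h), (∫ t in a..(a + h), |gg p t|) := by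
    refine intervalIntegral.integral_mono_on hab ?_ intervalIntegrable_const key
    exact (continuous_const.sub (ff_continuous hp)).abs.intervalIntegrable _ _
  refine this.trans ?_
  rw [intervalIntegral.integral_const, smul_eq_mul]
  ring_nf
  exact le_rfl

end RiemannAux

open RiemannAux

theorem sum_eq_integral_add_error (ρ β : ℝ) (hρ : 0 < ρ) (hβ0 : 0 < β) (hβ1 : β < 1) :
    ∃ K : ℝ, ∃ N : ℕ, ∀ n ≥ N,
      |(∑ k ∈ Finset.Icc (⌊Real.log n⌋₊ + 1) ⌊(n : ℝ) ^ (2 / (3 + β))⌋₊,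
            (1 / Real.sqrt n) * ((k : ℝ) / Real.sqrt n) ^ (2 + ρ) *
              Real.exp (-(k : ℝ) ^ 2 / (2 * n))) -
          ∫ x in (((⌊Real.log n⌋₊ : ℝ) + 1) / Real.sqrt n)..
              (((⌊(n : ℝ) ^ (2 / (3 + β))⌋₊ : ℝ) + 1) / Real.sqrt n),
            x ^ (2 + ρ) * Real.exp (-x ^ 2 / 2)| ≤
        K * (n : ℝ) ^ (-(1 : ℝ) / 2) := by
  set p := 2 + ρ with hpdef
  have hp : 1 ≤ p := by simp [hpdef]; linarith
  set C := ∫ x in Set.Ioi (0:ℝ), GG p x with hCdef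
  have hC0 : 0 ≤ C := setIntegral_nonneg measurableSet_Ioi (fun x hx => by
    have hx' : (0:ℝ) < x := hx
    unfold GG
    have h0 : (0:ℝ) ≤ p := by linarith
    positivity)
  refine ⟨C, 625, fun n hn => ?_⟩
  have hn1 : (1:ℝ) ≤ n := by
    have : (1:ℕ) ≤ n := le_trans (by norm_num) hn
    exact_mod_cast this
  have hn0 : (0:ℝ) < n := by linarith
  set r := ⌊Real.log n⌋₊ with hr
  set s := ⌊(n : ℝ) ^ (2 / (3 + β))⌋₊ with hs
  have hsq : (0:ℝ) < Real.sqrt n := Real.sqrt_pos.mpr hn0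
  set h := 1 / Real.sqrt n with hh
  have hh0 : 0 < h := by positivity
  -- r + 1 ≤ s for n ≥ 625
  have hrs : r + 1 ≤ s := by
    have ht5 : (5:ℝ) ≤ (n:ℝ) ^ ((1:ℝ)/4) := by
      have h625 : (625:ℝ) ≤ n := by exact_mod_cast hn
      calc (5:ℝ) = (625:ℝ) ^ ((1:ℝ)/4) := by
            rw [show (625:ℝ) = 5 ^ (4:ℕ) by norm_num, ← Real.rpow_natCast 5 4,
              ← Real.rpow_mul (by norm_num)]
            norm_num
        _ ≤ (n:ℝ) ^ ((1:ℝ)/4) := Real.rpow_le_rpow (by norm_num) h625 (by norm_num)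
    have hlog : Real.log n ≤ 4 * (n:ℝ) ^ ((1:ℝ)/4) := by
      have := Real.log_le_rpow_div (le_of_lt hn0) (show (0:ℝ) < 1/4 by norm_num)
      rw [div_div_eq_mul_div] at this
      linarith
    have hfloor : (r:ℝ) ≤ Real.log n := Nat.floor_le (Real.log_nonneg hn1)
    have hsq2 : ((n:ℝ) ^ ((1:ℝ)/4)) ^ (2:ℕ) = (n:ℝ) ^ ((1:ℝ)/2) := by
      rw [← Real.rpow_natCast _ 2, ← Real.rpow_mul (le_of_lt hn0)]
      norm_num
    have hsqle : ((r:ℝ) + 1) ≤ (n:ℝ) ^ ((1:ℝ)/2) := by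
      rw [← hsq2]
      nlinarith [ht5, hlog, hfloor]
    have hexp : (n:ℝ) ^ ((1:ℝ)/2) ≤ (n:ℝ) ^ (2/(3+β)) := by
      refine Real.rpow_le_rpow_of_exponent_le hn1 ?_
      rw [div_le_div_iff₀ (by norm_num) (by linarith)]
      linarith
    have : ((r + 1 : ℕ) : ℝ) ≤ (n:ℝ) ^ (2/(3+β)) := by push_cast; linarith
    exact Nat.le_floor this
  -- rewrite the sum
  have hIcc : Finset.Icc (r+1) s = Finset.Ico (r+1) (s+1) := (Finset.Ico_add_one_right_eq_Icc _ _).symm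
  have hterm : ∀ k ∈ Finset.Ico (r+1) (s+1),
      1 / Real.sqrt n * ((k : ℝ) / Real.sqrt n) ^ p * Real.exp (-(k : ℝ) ^ 2 / (2 * n)) =
        h * ff p ((k : ℝ) / Real.sqrt n) := by
    intro k _
    unfold ff
    rw [hh]
    have e1 : (((k:ℝ) / Real.sqrt n) ^ 2 : ℝ) = (k:ℝ) ^ 2 / n := by
      rw [div_pow, Real.sq_sqrt (le_of_lt hn0)]
    rw [e1, show -((k:ℝ) ^ 2 / (n:ℝ)) / 2 = -(k:ℝ) ^ 2 / (2 * n) by ring]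
    ring
  -- splitting the integrals
  have hsplit : ∑ k ∈ Finset.Ico (r+1) (s+1),
      (∫ x in ((k:ℝ)/Real.sqrt n)..(((k+1:ℕ):ℝ)/Real.sqrt n), x ^ p * Real.exp (-x ^ 2 / 2)) =
      ∫ x in (((r+1:ℕ):ℝ)/Real.sqrt n)..(((s+1:ℕ):ℝ)/Real.sqrt n),
        x ^ p * Real.exp (-x ^ 2 / 2) :=
    intervalIntegral.sum_integral_adjacent_intervals_Ico
      (a := fun k : ℕ => (k:ℝ)/Real.sqrt n) (by omega)
      (fun k _ => ((ff_continuous hp).intervalIntegrable _ _))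
  have hsplit2 : ∑ k ∈ Finset.Ico (r+1) (s+1),
      (∫ x in ((k:ℝ)/Real.sqrt n)..(((k+1:ℕ):ℝ)/Real.sqrt n), |gg p x|) =
      ∫ x in (((r+1:ℕ):ℝ)/Real.sqrt n)..(((s+1:ℕ):ℝ)/Real.sqrt n), |gg p x| :=
    intervalIntegral.sum_integral_adjacent_intervals_Ico
      (a := fun k : ℕ => (k:ℝ)/Real.sqrt n) (by omega)
      (fun k _ => (((gg_continuous hp).abs).intervalIntegrable _ _))
  have hAcast : ((r:ℝ) + 1)/Real.sqrt n = ((r+1:ℕ):ℝ)/Real.sqrt n := by push_cast; ring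
  have hBcast : ((s:ℝ) + 1)/Real.sqrt n = ((s+1:ℕ):ℝ)/Real.sqrt n := by push_cast; ring
  -- total variation bound
  have hintC : (∫ x in (((r+1:ℕ):ℝ)/Real.sqrt n)..(((s+1:ℕ):ℝ)/Real.sqrt n), |gg p x|) ≤ C := by
    have hA0 : (0:ℝ) < ((r+1:ℕ):ℝ)/Real.sqrt n := by positivity
    have hAB : ((r+1:ℕ):ℝ)/Real.sqrt n ≤ ((s+1:ℕ):ℝ)/Real.sqrt n := by
      gcongr
      exact le_trans (Nat.le_succ r) hrs
    have hsub : Set.Ioc (((r+1:ℕ):ℝ)/Real.sqrt n) (((s+1:ℕ):ℝ)/Real.sqrt n) ⊆ Set.Ioi 0 :=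
      fun x hx => lt_trans hA0 hx.1
    rw [intervalIntegral.integral_of_le hAB]
    calc (∫ x in Set.Ioc (((r+1:ℕ):ℝ)/Real.sqrt n) (((s+1:ℕ):ℝ)/Real.sqrt n), |gg p x|)
        ≤ ∫ x in Set.Ioc (((r+1:ℕ):ℝ)/Real.sqrt n) (((s+1:ℕ):ℝ)/Real.sqrt n), GG p x := by
          refine setIntegral_mono_on ?_ ?_ measurableSet_Ioc ?_
          · exact ((gg_continuous hp).abs).integrableOn_Ioc
          · exact (GG_integrableOn hp).mono_set hsub
          · exact fun x hx => abs_gg_le hp (lt_trans hA0 hx.1)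
      _ ≤ C := by
          refine setIntegral_mono_set (GG_integrableOn hp) ?_ (Filter.Eventually.of_forall hsub)
          filter_upwards [self_mem_ae_restrict measurableSet_Ioi] with x hx
          have hx' : (0:ℝ) < x := hx
          have h0 : (0:ℝ) ≤ p := by linarith
          show (0:ℝ) ≤ GG p x
          unfold GG
          positivity
  -- final bound
  have hhrw : h = (n:ℝ) ^ (-(1:ℝ)/2) := by
    rw [hh, Real.sqrt_eq_rpow, one_div, ← Real.rpow_neg (le_of_lt hn0)]
    norm_num
  rw [hIcc, Finset.sum_congr rfl hterm, hAcast, hBcast, ← hsplit, ← Finset.sum_sub_distrib]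
  calc |∑ k ∈ Finset.Ico (r+1) (s+1), (h * ff p ((k:ℝ)/Real.sqrt n) -
          ∫ x in ((k:ℝ)/Real.sqrt n)..(((k+1:ℕ):ℝ)/Real.sqrt n), x ^ p * Real.exp (-x ^ 2 / 2))|
      ≤ ∑ k ∈ Finset.Ico (r+1) (s+1), |h * ff p ((k:ℝ)/Real.sqrt n) -
          ∫ x in ((k:ℝ)/Real.sqrt n)..(((k+1:ℕ):ℝ)/Real.sqrt n), x ^ p * Real.exp (-x ^ 2 / 2)| :=
        Finset.abs_sum_le_sum_abs _ _
    _ ≤ ∑ k ∈ Finset.Ico (r+1) (s+1),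
          h * ∫ x in ((k:ℝ)/Real.sqrt n)..(((k+1:ℕ):ℝ)/Real.sqrt n), |gg p x| := by
        refine Finset.sum_le_sum fun k hk => ?_
        have hk1 : 1 ≤ k := le_trans (Nat.le_add_left 1 r) (Finset.mem_Ico.mp hk).1
        have hak : (0:ℝ) < (k:ℝ)/Real.sqrt n := by
          have : (0:ℝ) < (k:ℝ) := by exact_mod_cast hk1
          positivity
        have hstep := step hp hak hh0.le
        have e2 : (k:ℝ)/Real.sqrt n + h = ((k+1:ℕ):ℝ)/Real.sqrt n := by
          rw [hh, ← add_div]; push_cast; ring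
        rw [e2] at hstep
        exact hstep
    _ = h * ∑ k ∈ Finset.Ico (r+1) (s+1),
          ∫ x in ((k:ℝ)/Real.sqrt n)..(((k+1:ℕ):ℝ)/Real.sqrt n), |gg p x| :=
        (Finset.mul_sum _ _ _).symm
    _ = h * ∫ x in (((r+1:ℕ):ℝ)/Real.sqrt n)..(((s+1:ℕ):ℝ)/Real.sqrt n), |gg p x| := by
        rw [hsplit2]
    _ ≤ h * C := mul_le_mul_of_nonneg_left hintC hh0.le
    _ = C * (n:ℝ) ^ (-(1:ℝ)/2) := by rw [hhrw]; ring
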